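/- Let K ⊆ ℝⁿ be a nonempty closed set and f = (f_1,…,f_q) a vector polynomial. (i) If SOL^s(K, f) ≠ ∅, then there exist x̄ ∈ K and a nonempty closed set S ⊆ ℝⁿ with (K_x̄)_∞ ⊆ S_∞ ⊆ K_∞ such that SOL^s(S_∞, f^∞) ≠ ∅. (ii) If SOL^w(K, f) ≠ ∅, then there exist x̄ ∈ K and a nonempty closed set S ⊆ ℝⁿ with (K_x̄)_∞ ⊆ S_∞ ⊆ K_∞ such that SOL^w(S_∞, f^∞) ≠ ∅. -/

import Mathlib

open Filter Topology MvPolynomial Bornology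

noncomputable section

/-- The asymptotic (recession) cone of a set `A ⊆ ℝⁿ`. -/
def asymCone {n : ℕ} (A : Set (Fin n → ℝ)) : Set (Fin n → ℝ) :=
  {v | ∃ (t : ℕ → ℝ) (x : ℕ → (Fin n → ℝ)),
    Filter.Tendsto t Filter.atTop Filter.atTop ∧ (∀ k, x k ∈ A) ∧
    Filter.Tendsto (fun k => (t k)⁻¹ • x k) Filter.atTop (nhds v)}

/-- Pareto efficient solutions of the vector map `g` on `C`. -/
def SOLs {n q : ℕ} (C : Set (Fin n → ℝ)) (g : Fin q → (Fin n → ℝ) → ℝ) :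
    Set (Fin n → ℝ) :=
  {x | x ∈ C ∧ ¬ ∃ y ∈ C, (∀ i, g i y ≤ g i x) ∧ (∃ i, g i y ≠ g i x)}

/-- Weak Pareto efficient solutions of the vector map `g` on `C`. -/
def SOLw {n q : ℕ} (C : Set (Fin n → ℝ)) (g : Fin q → (Fin n → ℝ) → ℝ) :
    Set (Fin n → ℝ) :=
  {x | x ∈ C ∧ ¬ ∃ y ∈ C, ∀ i, g i y < g i x}

/-- Global minimizers of a scalar function `p` on `C`. -/
def SOLmin {n : ℕ} (C : Set (Fin n → ℝ)) (p : (Fin n → ℝ) → ℝ) :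
    Set (Fin n → ℝ) :=
  {x | x ∈ C ∧ ∀ y ∈ C, p x ≤ p y}

/-- The recession polynomial (leading term: top-degree homogeneous part) of a
polynomial, as a function on `ℝⁿ`. -/
noncomputable def recPoly {n : ℕ} (p : MvPolynomial (Fin n) ℝ) : (Fin n → ℝ) → ℝ :=
  fun x => MvPolynomial.eval x (MvPolynomial.homogeneousComponent p.totalDegree p)

lemma eval_smul_of_isHomogeneous {n d : ℕ} {p : MvPolynomial (Fin n) ℝ}
    (hp : p.IsHomogeneous d) (c : ℝ) (x : Fin n → ℝ) :
    eval (c • x) p = c ^ d * eval x p := by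
  rw [eval_eq', eval_eq', Finset.mul_sum]
  refine Finset.sum_congr rfl fun μ hμ => ?_
  have hdeg : ∑ i, μ i = d := by
    have h1 : Finsupp.degree μ = d := by
      rw [Finsupp.degree_eq_weight_one]
      exact hp (MvPolynomial.mem_support_iff.mp hμ)
    rw [← h1, Finsupp.degree]
    exact (Finset.sum_subset (Finset.subset_univ _)
      (fun i _ hi => Finsupp.notMem_support_iff.mp hi)).symm
  have hprod : (∏ i, ((c • x) i) ^ μ i) = c ^ d * ∏ i, (x i) ^ μ i := by
    simp only [Pi.smul_apply, smul_eq_mul, mul_pow, Finset.prod_mul_distrib,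
      Finset.prod_pow_eq_pow_sum, hdeg]
  rw [hprod]; ring

lemma recPoly_zero {n : ℕ} (p : MvPolynomial (Fin n) ℝ) (hdeg : 1 ≤ p.totalDegree) :
    recPoly p (0 : Fin n → ℝ) = 0 := by
  have h := eval_smul_of_isHomogeneous
    (MvPolynomial.homogeneousComponent_isHomogeneous p.totalDegree p) (0 : ℝ) (0 : Fin n → ℝ)
  rw [zero_smul, zero_pow (by omega), zero_mul] at h
  exact h

lemma zero_mem_asymCone {n : ℕ} {A : Set (Fin n → ℝ)} (hA : A.Nonempty) :
    (0 : Fin n → ℝ) ∈ asymCone A := by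
  obtain ⟨a, ha⟩ := hA
  refine ⟨fun k => (k : ℝ) + 1, fun _ => a, ?_, fun _ => ha, ?_⟩
  · exact tendsto_atTop_add_const_right _ _ tendsto_natCast_atTop_atTop
  · have h1 : Tendsto (fun k : ℕ => ((k : ℝ) + 1)⁻¹) atTop (nhds 0) :=
      tendsto_inv_atTop_zero.comp
        (tendsto_atTop_add_const_right _ _ tendsto_natCast_atTop_atTop)
    simpa using h1.smul_const a

lemma asymCone_mono {n : ℕ} {A B : Set (Fin n → ℝ)} (h : A ⊆ B) :
    asymCone A ⊆ asymCone B := by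
  rintro v ⟨t, x, ht, hx, hlim⟩
  exact ⟨t, x, ht, fun k => h (hx k), hlim⟩

lemma tendsto_eval_atBot {n : ℕ} (p : MvPolynomial (Fin n) ℝ) (hdeg : 1 ≤ p.totalDegree)
    (t : ℕ → ℝ) (x : ℕ → Fin n → ℝ) (v : Fin n → ℝ)
    (ht : Tendsto t atTop atTop)
    (hlim : Tendsto (fun k => (t k)⁻¹ • x k) atTop (nhds v))
    (hv : recPoly p v < 0) :
    Tendsto (fun k => eval (x k) p) atTop atBot := by
  set D := p.totalDegree with hD
  set u : ℕ → Fin n → ℝ := fun k => (t k)⁻¹ • x k with hu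
  have htpos : ∀ᶠ k in atTop, 0 < t k := ht.eventually (eventually_gt_atTop 0)
  -- The auxiliary sequence of normalized values
  set g : ℕ → ℝ := fun k =>
    ∑ d ∈ Finset.range (D + 1),
      ((t k)⁻¹) ^ (D - d) * eval (u k) (MvPolynomial.homogeneousComponent d p) with hg
  have hinv : Tendsto (fun k => (t k)⁻¹) atTop (nhds 0) := tendsto_inv_atTop_zero.comp ht
  have hgl : Tendsto g atTop (nhds (recPoly p v)) := by
    have hsum : Tendsto g atTop
        (nhds (∑ d ∈ Finset.range (D + 1),
          (0 : ℝ) ^ (D - d) * eval v (MvPolynomial.homogeneousComponent d p))) := by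
      refine tendsto_finset_sum _ fun d _ => ?_
      exact (hinv.pow (D - d)).mul ((MvPolynomial.continuous_eval _).continuousAt.tendsto.comp hlim)
    have heq : (∑ d ∈ Finset.range (D + 1),
        (0 : ℝ) ^ (D - d) * eval v (MvPolynomial.homogeneousComponent d p)) = recPoly p v := by
      rw [Finset.sum_eq_single D]
      · simp [recPoly, hD]
      · intro d hd hne
        have : d < D := by
          have := Finset.mem_range.mp hd; omega
        rw [zero_pow (by omega), zero_mul]
      · intro h; exact absurd (Finset.self_mem_range_succ D) h
    rwa [heq] at hsum
  have hquot : ∀ᶠ k in atTop, eval (x k) p / (t k) ^ D = g k := by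
    filter_upwards [htpos] with k hk
    have hne : t k ≠ 0 := ne_of_gt hk
    have hxk : x k = t k • u k := by
      rw [hu]; simp [smul_smul, mul_inv_cancel₀ hne]
    have hev : eval (x k) p =
        ∑ d ∈ Finset.range (D + 1), (t k) ^ d *
          eval (u k) (MvPolynomial.homogeneousComponent d p) := by
      conv_lhs => rw [hxk, ← MvPolynomial.sum_homogeneousComponent p]
      rw [map_sum]
      exact Finset.sum_congr rfl fun d _ => eval_smul_of_isHomogeneous
        (MvPolynomial.homogeneousComponent_isHomogeneous d p) _ _
    rw [hev, Finset.sum_div]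
    refine Finset.sum_congr rfl fun d hd => ?_
    have hdle : d ≤ D := by have := Finset.mem_range.mp hd; omega
    have hpow : (t k) ^ d / (t k) ^ D = ((t k)⁻¹) ^ (D - d) := by
      have hsplit : t k ^ D = t k ^ d * t k ^ (D - d) := by
        rw [← pow_add]; congr 1; omega
      rw [inv_pow, hsplit]
      field_simp
    rw [← hpow]; ring
  have h1 : Tendsto (fun k => eval (x k) p / (t k) ^ D) atTop (nhds (recPoly p v)) :=
    hgl.congr' (hquot.mono fun k hk => hk.symm)
  have h2 : Tendsto (fun k => (t k) ^ D) atTop atTop :=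
    (tendsto_pow_atTop (by omega)).comp ht
  have h3 := h1.neg_mul_atTop hv h2
  refine h3.congr' ?_
  filter_upwards [htpos] with k hk
  exact div_mul_cancel₀ _ (pow_ne_zero _ (ne_of_gt hk))

theorem stmt10 {n q : ℕ} (K : Set (Fin n → ℝ)) (hKne : K.Nonempty) (hKcl : IsClosed K)
    (f : Fin q → MvPolynomial (Fin n) ℝ) (hdeg : ∀ i, 1 ≤ (f i).totalDegree) :
    ((SOLs K (fun i x => eval x (f i))).Nonempty →
      ∃ xbar ∈ K, ∃ S : Set (Fin n → ℝ), S.Nonempty ∧ IsClosed S ∧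
        asymCone {x ∈ K | ∀ j, eval x (f j) ≤ eval xbar (f j)} ⊆ asymCone S ∧
        asymCone S ⊆ asymCone K ∧
        (SOLs (asymCone S) (fun i => recPoly (f i))).Nonempty) ∧
    ((SOLw K (fun i x => eval x (f i))).Nonempty →
      ∃ xbar ∈ K, ∃ S : Set (Fin n → ℝ), S.Nonempty ∧ IsClosed S ∧
        asymCone {x ∈ K | ∀ j, eval x (f j) ≤ eval xbar (f j)} ⊆ asymCone S ∧
        asymCone S ⊆ asymCone K ∧
        (SOLw (asymCone S) (fun i => recPoly (f i))).Nonempty) := by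
  have hScl : ∀ xbar : Fin n → ℝ,
      IsClosed {x ∈ K | ∀ j, eval x (f j) ≤ eval xbar (f j)} := by
    intro xbar
    have : {x ∈ K | ∀ j, eval x (f j) ≤ eval xbar (f j)} =
        K ∩ ⋂ j, {x | eval x (f j) ≤ eval xbar (f j)} := by
      ext x; simp [Set.mem_iInter]
    rw [this]
    exact hKcl.inter (isClosed_iInter fun j =>
      isClosed_le (MvPolynomial.continuous_eval _) continuous_const)
  constructor
  · rintro ⟨xbar, hxK, hns⟩
    refine ⟨xbar, hxK, {x ∈ K | ∀ j, eval x (f j) ≤ eval xbar (f j)},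
      ⟨xbar, hxK, fun j => le_refl _⟩, hScl xbar, subset_rfl,
      asymCone_mono (Set.sep_subset _ _), ⟨0, ?_, ?_⟩⟩
    · exact zero_mem_asymCone ⟨xbar, hxK, fun j => le_refl _⟩
    · rintro ⟨v, hv, hle, j, hne⟩
      have h0 : ∀ i, recPoly (f i) 0 = 0 := fun i => recPoly_zero (f i) (hdeg i)
      have hj : recPoly (f j) v < 0 := by
        have h1 : recPoly (f j) v ≤ recPoly (f j) 0 := hle j
        have h2 : recPoly (f j) v ≠ recPoly (f j) 0 := hne
        rw [h0 j] at h1 h2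
        exact lt_of_le_of_ne h1 h2
      obtain ⟨t, x, ht, hxS, hlim⟩ := hv
      have hbot := tendsto_eval_atBot (f j) (hdeg j) t x v ht hlim hj
      obtain ⟨k, hk⟩ := (hbot.eventually (eventually_lt_atBot (eval xbar (f j)))).exists
      exact hns ⟨x k, (hxS k).1, fun i => (hxS k).2 i, j, ne_of_lt hk⟩
  · rintro ⟨xbar, hxK, hnw⟩
    refine ⟨xbar, hxK, {x ∈ K | ∀ j, eval x (f j) ≤ eval xbar (f j)},
      ⟨xbar, hxK, fun j => le_refl _⟩, hScl xbar, subset_rfl,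
      asymCone_mono (Set.sep_subset _ _), ⟨0, ?_, ?_⟩⟩
    · exact zero_mem_asymCone ⟨xbar, hxK, fun j => le_refl _⟩
    · rintro ⟨v, hv, hlt⟩
      have h0 : ∀ i, recPoly (f i) 0 = 0 := fun i => recPoly_zero (f i) (hdeg i)
      obtain ⟨t, x, ht, hxS, hlim⟩ := hv
      have hev : ∀ᶠ k in atTop, ∀ i, eval (x k) (f i) < eval xbar (f i) := by
        rw [eventually_all]
        intro i
        have hi : recPoly (f i) v < 0 := by
          have h2 : recPoly (f i) v < recPoly (f i) 0 := hlt i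
          rwa [h0 i] at h2
        exact (tendsto_eval_atBot (f i) (hdeg i) t x v ht hlim hi).eventually
          (eventually_lt_atBot (eval xbar (f i)))
      obtain ⟨k, hk⟩ := hev.exists
      exact hnw ⟨x k, (hxS k).1, hk⟩
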